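/- arXiv:1106.5358 — 2 statements merged into one kernel-verified Lean document; each statement's English description precedes it below -/
import Mathlib

section
/- Stabilization is well-defined: for a finite connected multigraph G with sink s, any configuration η ∈ ℕ^V stabilizes in finitely many legal topplings, and the resulting stable configuration is independent of the order in which topplings are performed. -/
/-- Degree of `x` in the multigraph: edges to the sink plus edges to non-sink vertices. -/
def sandDeg {V : Type*} [Fintype V] (a : V → V → ℕ) (aS : V → ℕ) (x : V) : ℕ :=
  aS x + ∑ y, a x y

/-- The result of toppling the vertex `x`. -/
def toppleAt {V : Type*} [Fintype V] [DecidableEq V]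
    (a : V → V → ℕ) (aS : V → ℕ) (x : V) (η : V → ℕ) : V → ℕ :=
  fun y => if y = x then η x + a x x - sandDeg a aS x else η y + a x y

/-- A single legal toppling step. -/
def LegalStep {V : Type*} [Fintype V] [DecidableEq V]
    (a : V → V → ℕ) (aS : V → ℕ) (η η' : V → ℕ) : Prop :=
  ∃ x : V, sandDeg a aS x ≤ η x ∧ η' = toppleAt a aS x η

/-- Stability of a configuration. -/
def SandStable {V : Type*} [Fintype V] (a : V → V → ℕ) (aS : V → ℕ) (η : V → ℕ) : Prop :=
  ∀ x : V, η x < sandDeg a aS x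

section Aux
variable {V : Type*} [Fintype V] [DecidableEq V] (a : V → V → ℕ) (aS : V → ℕ)

lemma topple_comm {x y : V} (hxy : x ≠ y) (η : V → ℕ)
    (hx : sandDeg a aS x ≤ η x) (hy : sandDeg a aS y ≤ η y) :
    toppleAt a aS y (toppleAt a aS x η) = toppleAt a aS x (toppleAt a aS y η) := by
  funext z
  simp only [toppleAt]
  by_cases hzx : z = x <;> by_cases hzy : z = y <;>
    simp [hzx, hzy, hxy, hxy.symm] <;> omega

lemma topple_mass (x : V) (η : V → ℕ) (hx : sandDeg a aS x ≤ η x) :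
    ∑ z, toppleAt a aS x η z + aS x = ∑ z, η z := by
  have key : ∀ z, toppleAt a aS x η z + (if z = x then sandDeg a aS x else 0)
      = η z + a x z := by
    intro z
    by_cases hz : z = x
    · subst hz; simp [toppleAt]; omega
    · simp [toppleAt, hz]
  have h1 : ∑ z, (toppleAt a aS x η z + (if z = x then sandDeg a aS x else 0))
      = ∑ z, (η z + a x z) := Finset.sum_congr rfl fun z _ => key z
  rw [Finset.sum_add_distrib, Finset.sum_add_distrib, Finset.sum_ite_eq' Finset.univ x] at h1
  simp only [Finset.mem_univ, if_pos] at h1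
  have hD : sandDeg a aS x = aS x + ∑ y, a x y := rfl
  omega

lemma unbounded_helper (u : ℕ → ℕ) (N : ℕ)
    (hmono : ∀ n, N ≤ n → u n ≤ u (n + 1))
    (hinc : ∀ m, ∃ n, m ≤ n ∧ N ≤ n ∧ u n + 1 ≤ u (n + 1)) :
    ∀ c, ∃ n, N ≤ n ∧ c ≤ u n := by
  have mono2 : ∀ p q, N ≤ p → p ≤ q → u p ≤ u q := by
    intro p q hp hpq
    induction q, hpq using Nat.le_induction with
    | base => exact le_refl _
    | succ q hq ih => exact ih.trans (hmono q (hp.trans hq))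
  intro c
  induction c with
  | zero => exact ⟨N, le_refl _, Nat.zero_le _⟩
  | succ c ih =>
    obtain ⟨n, hn, hcn⟩ := ih
    obtain ⟨m, hm1, hm2, hm3⟩ := hinc n
    refine ⟨m + 1, hm2.trans (Nat.le_succ m), ?_⟩
    have := mono2 n m hn hm1
    omega

lemma no_infinite
    (hconn : ∀ x : V, ∃ y : V,
      Relation.ReflTransGen (fun u v => 0 < a u v) x y ∧ 0 < aS y) :
    ¬ ∃ f : ℕ → (V → ℕ), ∀ n, LegalStep a aS (f n) (f (n + 1)) := by
  rintro ⟨f, hf⟩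
  choose x hx1 hx2 using hf
  set M : ℕ → ℕ := fun n => ∑ z, f n z with hM
  have hMstep : ∀ n, M (n + 1) + aS (x n) = M n := by
    intro n
    have h := topple_mass a aS (x n) (f n) (hx1 n)
    simp only [hM]
    rw [hx2 n]
    exact h
  have hMsum : ∀ n, M n + ∑ k ∈ Finset.range n, aS (x k) = M 0 := by
    intro n
    induction n with
    | zero => simp
    | succ n ih => rw [Finset.sum_range_succ]; have := hMstep n; omega
  have hMle : ∀ n, M n ≤ M 0 := fun n => by have := hMsum n; omega
  have hN1 : ∃ N, ∀ n, N ≤ n → aS (x n) = 0 := by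
    by_contra hcon
    push_neg at hcon
    obtain ⟨n, -, hcn⟩ := unbounded_helper (fun n => ∑ k ∈ Finset.range n, aS (x k)) 0
      (fun n _ => by simp only [Finset.sum_range_succ]; omega)
      (fun m => by
        obtain ⟨n, hn, hne⟩ := hcon m
        exact ⟨n, hn, Nat.zero_le _, by simp only [Finset.sum_range_succ]; omega⟩)
      (M 0 + 1)
    have := hMsum n
    omega
  haveI : Nonempty V := ⟨x 0⟩
  obtain ⟨v₀, hv₀⟩ : ∃ v : V, ∀ m, ∃ n, m ≤ n ∧ x n = v := by
    obtain ⟨v, hv⟩ := Finite.exists_infinite_fiber x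
    refine ⟨v, fun m => ?_⟩
    obtain ⟨n, hn, hmn⟩ := (Set.infinite_coe_iff.mp hv).exists_gt m
    exact ⟨n, hmn.le, hn⟩
  have hclosed : ∀ v u, (∀ m, ∃ n, m ≤ n ∧ x n = v) → 0 < a v u →
      (∀ m, ∃ n, m ≤ n ∧ x n = u) := by
    intro v u hv hvu
    by_contra hu
    push_neg at hu
    obtain ⟨m, hm⟩ := hu
    have mono : ∀ n, m ≤ n → f n u ≤ f (n + 1) u := by
      intro n hn
      rw [hx2 n]
      simp only [toppleAt]
      rw [if_neg (fun h : u = x n => hm n hn h.symm)]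
      omega
    have inc : ∀ m', ∃ n, m' ≤ n ∧ m ≤ n ∧ f n u + 1 ≤ f (n + 1) u := by
      intro m'
      obtain ⟨n, hn, hxn⟩ := hv (max m m')
      refine ⟨n, (le_max_right m m').trans hn, (le_max_left m m').trans hn, ?_⟩
      rw [hx2 n]
      simp only [toppleAt]
      rw [if_neg (fun h : u = x n => hm n ((le_max_left m m').trans hn) h.symm)]
      rw [hxn]
      omega
    obtain ⟨n, -, hcn⟩ := unbounded_helper (fun n => f n u) m mono inc (M 0 + 1)
    have h1 : f n u ≤ M n :=
      Finset.single_le_sum (fun i _ => Nat.zero_le (f n i)) (Finset.mem_univ u)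
    have := hMle n
    omega
  obtain ⟨y, hpath, hy⟩ := hconn v₀
  have hSy : ∀ m, ∃ n, m ≤ n ∧ x n = y := by
    clear hy
    induction hpath with
    | refl => exact hv₀
    | tail _ h ih => exact hclosed _ _ ih h
  obtain ⟨N, hN⟩ := hN1
  obtain ⟨n, hn, hxn⟩ := hSy N
  have := hN n hn
  rw [hxn] at this
  omega

lemma sand_diamond : ∀ η η₁ η₂ : V → ℕ, LegalStep a aS η η₁ → LegalStep a aS η η₂ →
    ∃ d, Relation.ReflGen (LegalStep a aS) η₁ d ∧
      Relation.ReflTransGen (LegalStep a aS) η₂ d := by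
  rintro η η₁ η₂ ⟨x, hx, rfl⟩ ⟨y, hy, rfl⟩
  by_cases hxy : x = y
  · subst hxy; exact ⟨_, .refl, .refl⟩
  · refine ⟨toppleAt a aS y (toppleAt a aS x η), ?_, ?_⟩
    · refine Relation.ReflGen.single ⟨y, ?_, rfl⟩
      simp only [toppleAt]
      rw [if_neg (Ne.symm hxy)]
      omega
    · refine Relation.ReflTransGen.single ⟨x, ?_, topple_comm a aS hxy η hx hy⟩
      simp only [toppleAt]
      rw [if_neg hxy]
      omega

lemma stable_no_step {ξ d : V → ℕ} (h : SandStable a aS ξ)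
    (hr : Relation.ReflTransGen (LegalStep a aS) ξ d) : ξ = d := by
  rcases hr.cases_head with rfl | ⟨c, ⟨z, hz, -⟩, -⟩
  · rfl
  · exact absurd hz (not_le.mpr (h z))

lemma exists_stable
    (hni : ¬ ∃ f : ℕ → (V → ℕ), ∀ n, LegalStep a aS (f n) (f (n + 1)))
    (η : V → ℕ) :
    ∃ ξ, SandStable a aS ξ ∧ Relation.ReflTransGen (LegalStep a aS) η ξ := by
  by_contra h
  push_neg at h
  have hstep : ∀ ξ : {ξ : V → ℕ // Relation.ReflTransGen (LegalStep a aS) η ξ},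
      ∃ ξ' : {ξ : V → ℕ // Relation.ReflTransGen (LegalStep a aS) η ξ},
        LegalStep a aS ξ.1 ξ'.1 := by
    rintro ⟨ξ, hξ⟩
    have hns : ¬ SandStable a aS ξ := fun hs => h ξ hs hξ
    simp only [SandStable, not_forall, not_lt] at hns
    obtain ⟨z, hz⟩ := hns
    exact ⟨⟨toppleAt a aS z ξ, hξ.tail ⟨z, hz, rfl⟩⟩, z, hz, rfl⟩
  choose next hnext using hstep
  refine hni ⟨fun n => (next^[n] ⟨η, .refl⟩).1, fun n => ?_⟩
  show LegalStep a aS (next^[n] ⟨η, .refl⟩).1 (next^[n + 1] ⟨η, .refl⟩).1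
  rw [Function.iterate_succ_apply']
  exact hnext _

end Aux

/-- stabilization is well-defined: any configuration `η ∈ ℕ^V` on a finite
connected multigraph with sink reaches a stable configuration by finitely many legal
topplings, the stable configuration reached is independent of the order of topplings,
and there is no infinite sequence of legal topplings started from `η`. -/
theorem stmt_2 {V : Type*} [Fintype V] [DecidableEq V]
    (a : V → V → ℕ) (aS : V → ℕ)
    (hsymm : ∀ x y : V, a x y = a y x)
    (hconn : ∀ x : V, ∃ y : V,
      Relation.ReflTransGen (fun u v => 0 < a u v) x y ∧ 0 < aS y)
    (η : V → ℕ) :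
    (∃ ξ : V → ℕ, SandStable a aS ξ ∧
        Relation.ReflTransGen (LegalStep a aS) η ξ) ∧
    (∀ ξ₁ ξ₂ : V → ℕ, SandStable a aS ξ₁ → SandStable a aS ξ₂ →
        Relation.ReflTransGen (LegalStep a aS) η ξ₁ →
        Relation.ReflTransGen (LegalStep a aS) η ξ₂ → ξ₁ = ξ₂) ∧
    ¬ ∃ f : ℕ → (V → ℕ), f 0 = η ∧ ∀ n : ℕ, LegalStep a aS (f n) (f (n + 1)) := by
  have hni := no_infinite a aS hconn
  refine ⟨exists_stable a aS hni η, ?_, ?_⟩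
  · intro ξ₁ ξ₂ h1 h2 r1 r2
    obtain ⟨d, hd1, hd2⟩ := Relation.church_rosser (sand_diamond a aS) r1 r2
    rw [stable_no_step a aS h1 hd1, stable_no_step a aS h2 hd2]
  · rintro ⟨f, -, hf⟩
    exact hni ⟨f, hf⟩
end

section
/- For a spanning tree t = σ_G(η) produced by the Majumdar–Dhar bijection, the burning time of each vertex equals its tree distance to the sink: B(i) = {x ∈ V : d_t(s,x) = i} for all i ≥ 1, where d_t denotes graph distance in the tree t. -/
open Set

noncomputable section

/-- Number of oriented edges with tail `x` (the degree of `x` in the multigraph). -/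
def degD {Vp D : Type*} (tl : D → Vp) (x : Vp) : ℕ := {e : D | tl e = x}.ncard

/-- Unburnt sets of the Burning Algorithm: `U 0 = V⁺ \ {s}` and
`U (n+1) = {v ∈ U n : η v < deg_{U n} v}`. -/
def Up {Vp D : Type*} (tl hd : D → Vp) (s : Vp) (η : Vp → ℕ) : ℕ → Set Vp
  | 0 => {v | v ≠ s}
  | n + 1 => {v ∈ Up tl hd s η n |
      η v < Set.ncard {e : D | tl e = v ∧ hd e ∈ Up tl hd s η n}}

/-- Burning sets: `B 0 = {s}` and `B (n+1) = {v ∈ U n : η v ≥ deg_{U n} v}`. -/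
def Bp {Vp D : Type*} (tl hd : D → Vp) (s : Vp) (η : Vp → ℕ) : ℕ → Set Vp
  | 0 => {s}
  | n + 1 => {v ∈ Up tl hd s η n |
      Set.ncard {e : D | tl e = v ∧ hd e ∈ Up tl hd s η n} ≤ η v}

/-- `P_x`: the set of oriented edges from `x` to the set burning at time `i − 1`. -/
def PsetB {Vp D : Type*} (tl hd : D → Vp) (s : Vp) (η : Vp → ℕ) (i : ℕ) (x : Vp) :
    Set D :=
  {e : D | tl e = x ∧ hd e ∈ Bp tl hd s η (i - 1)}

/-- `n_x`: the number of edges from `x` to vertices burnt strictly before time `i`. -/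
def nBefore {Vp D : Type*} (tl hd : D → Vp) (s : Vp) (η : Vp → ℕ) (i : ℕ) (x : Vp) :
    ℕ :=
  Set.ncard {e : D | tl e = x ∧ hd e ∉ Up tl hd s η (i - 1)}

/-- Stability of a configuration. -/
def StableD {Vp D : Type*} (tl : D → Vp) (s : Vp) (η : Vp → ℕ) : Prop :=
  ∀ v : Vp, v ≠ s → η v < degD tl v

/-- `η` is allowed: no nonempty set of non-sink vertices is a forbidden
subconfiguration. -/
def AllowedD {Vp D : Type*} (tl hd : D → Vp) (s : Vp) (η : Vp → ℕ) : Prop :=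
  ∀ F : Set Vp, F.Nonempty → (∀ v ∈ F, v ≠ s) →
    ¬ (∀ v ∈ F, η v < Set.ncard {e : D | tl e = v ∧ hd e ∈ F})

/-- `t` is the spanning tree `σ_G(η)` of the Majumdar–Dhar construction: for every
vertex `x` burning at time `i ≥ 1`, the tree edge `t x` belongs to `P_x` (it points
to a vertex burning at time `i − 1`) and is the edge `α_{P_x,K_x}⁻¹(η x)`, i.e.
`α_{P_x,K_x}(t x) = η x` where `K_x` starts at `deg_G x − n_x`. -/
def IsMDTree {Vp D : Type*} (tl hd : D → Vp) (s : Vp)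
    (α : Vp → Set D → ℕ → D → ℕ) (η : Vp → ℕ)
    (t : {x : Vp // x ≠ s} → D) : Prop :=
  ∀ i : ℕ, 1 ≤ i → ∀ x : {x : Vp // x ≠ s}, x.val ∈ Bp tl hd s η i →
    t x ∈ PsetB tl hd s η i x.val ∧
    α x.val (PsetB tl hd s η i x.val)
      (degD tl x.val - nBefore tl hd s η i x.val) (t x) = η x.val

/-- Following the tree edge out of a vertex (the sink is a fixed point). -/
def folw {Vp D : Type*} [DecidableEq Vp] (hd : D → Vp) (s : Vp)
    (t : {x : Vp // x ≠ s} → D) : Vp → Vp :=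
  fun v => if h : v = s then s else hd (t ⟨v, h⟩)

section AuxMD

variable {Vp D : Type*} {tl hd : D → Vp} {s : Vp} {η : Vp → ℕ}

lemma Up_succ_subset (n : ℕ) : Up tl hd s η (n + 1) ⊆ Up tl hd s η n :=
  fun _ hv => hv.1

lemma Up_subset_zero : ∀ n, Up tl hd s η n ⊆ Up tl hd s η 0
  | 0 => subset_rfl
  | n + 1 => (Up_succ_subset n).trans (Up_subset_zero n)

lemma Bp_ne_s {k : ℕ} (hk : 1 ≤ k) {v : Vp} (hv : v ∈ Bp tl hd s η k) : v ≠ s := by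
  match k, hk with
  | m + 1, _ => exact Up_subset_zero m hv.1

lemma burn_complete [Fintype Vp] (ha : AllowedD tl hd s η) :
    ∀ v : Vp, v ≠ s → ∃ k, 1 ≤ k ∧ v ∈ Bp tl hd s η k := by
  -- the sequence of unburnt sets stabilizes
  have hfin : ∀ n, (Up tl hd s η n : Set Vp).Finite := fun n => Set.toFinite _
  have hstab : ∃ N, Up tl hd s η (N + 1) = Up tl hd s η N := by
    by_contra h
    push_neg at h
    have hlt : ∀ n, (Up tl hd s η (n + 1)).ncard < (Up tl hd s η n).ncard := by
      intro n
      have hsub := Up_succ_subset (tl := tl) (hd := hd) (s := s) (η := η) n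
      have hle := Set.ncard_le_ncard hsub (hfin n)
      rcases lt_or_eq_of_le hle with h' | h'
      · exact h'
      · exact absurd (Set.eq_of_subset_of_ncard_le hsub h'.ge (hfin n)) (h n)
    have key : ∀ n, (Up tl hd s η n).ncard + n ≤ (Up tl hd s η 0).ncard := by
      intro n
      induction n with
      | zero => simp
      | succ m ih => have := hlt m; omega
    exact absurd (key ((Up tl hd s η 0).ncard + 1)) (by have := key 0; omega)
  obtain ⟨N, hN⟩ := hstab
  -- U N must be empty by allowedness
  have hempty : Up tl hd s η N = ∅ := by
    by_contra hne
    have hNe : (Up tl hd s η N).Nonempty := Set.nonempty_iff_ne_empty.2 hne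
    refine ha (Up tl hd s η N) hNe (fun v hv => Up_subset_zero N hv) ?_
    intro v hv
    have : v ∈ Up tl hd s η (N + 1) := hN ▸ hv
    exact this.2
  intro v hvs
  have hv0 : v ∈ Up tl hd s η 0 := hvs
  have hvN : v ∉ Up tl hd s η N := by rw [hempty]; exact notMem_empty v
  -- take the least n with v ∉ U n
  have hex : ∃ n, v ∉ Up tl hd s η n := ⟨N, hvN⟩
  classical
  set k := Nat.find hex with hk
  have hk0 : v ∉ Up tl hd s η k := Nat.find_spec hex
  have hkpos : 1 ≤ k := by
    rcases Nat.eq_zero_or_pos k with h | h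
    · exact absurd (h ▸ hv0 : v ∈ Up tl hd s η k) hk0
    · exact h
  obtain ⟨m, hm⟩ : ∃ m, k = m + 1 := ⟨k - 1, by omega⟩
  have hvm : v ∈ Up tl hd s η m := by
    by_contra h
    have hle : k ≤ m := Nat.find_le h
    omega
  refine ⟨k, hkpos, ?_⟩
  rw [hm]
  refine ⟨hvm, ?_⟩
  by_contra h
  push_neg at h
  exact (hm ▸ hk0) ⟨hvm, h⟩

end AuxMD

section ChainMD

variable {Vp D : Type*} [DecidableEq Vp] {tl hd : D → Vp} {s : Vp}
  {α : Vp → Set D → ℕ → D → ℕ} {η : Vp → ℕ} {t : {x : Vp // x ≠ s} → D}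

lemma folw_mem_Bp (ht : IsMDTree tl hd s α η t) {k : ℕ} (hk : 1 ≤ k)
    {v : Vp} (hv : v ∈ Bp tl hd s η k) :
    folw hd s t v ∈ Bp tl hd s η (k - 1) := by
  have hvs : v ≠ s := Bp_ne_s hk hv
  have h := (ht k hk ⟨v, hvs⟩ hv).1
  simp only [folw, dif_neg hvs]
  exact h.2

lemma iter_mem_Bp (ht : IsMDTree tl hd s α η t) {i : ℕ}
    {v : Vp} (hv : v ∈ Bp tl hd s η i) :
    ∀ j ≤ i, (folw hd s t)^[j] v ∈ Bp tl hd s η (i - j) := by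
  intro j
  induction j with
  | zero => intro _; simpa using hv
  | succ m ih =>
      intro hmi
      have hm : m ≤ i := by omega
      have h1 : (folw hd s t)^[m] v ∈ Bp tl hd s η (i - m) := ih hm
      have hpos : 1 ≤ i - m := by omega
      have h2 := folw_mem_Bp ht hpos h1
      rw [Function.iterate_succ_apply']
      have : i - m - 1 = i - (m + 1) := by omega
      exact this ▸ h2

lemma Bp_iter_eq (ht : IsMDTree tl hd s α η t) {i : ℕ} (hi : 1 ≤ i)
    {v : Vp} (hv : v ∈ Bp tl hd s η i) :
    (folw hd s t)^[i] v = s ∧ ∀ j < i, (folw hd s t)^[j] v ≠ s := by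
  constructor
  · have := iter_mem_Bp ht hv i le_rfl
    simpa [Bp] using this
  · intro j hj
    have := iter_mem_Bp ht hv j (by omega)
    exact Bp_ne_s (by omega) this

end ChainMD

/-- for the spanning tree `t = σ_G(η)` produced by the Majumdar–Dhar
bijection, the burning time of each vertex equals its tree distance to the sink:
for all `i ≥ 1`, `v ∈ B(i)` iff the unique tree path from `v` reaches `s` in exactly
`i` steps (i.e. `d_t(s,v) = i`). -/
theorem stmt_9 {Vp D : Type*} [Fintype Vp] [Fintype D] [DecidableEq Vp]
    (tl hd : D → Vp) (rev : D → D)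
    (hrev : ∀ e : D, tl (rev e) = hd e ∧ hd (rev e) = tl e ∧ rev (rev e) = e)
    (hloop : ∀ e : D, tl e ≠ hd e)
    (s : Vp)
    (hconn : ∀ v : Vp,
      Relation.ReflTransGen (fun u w => ∃ e : D, tl e = u ∧ hd e = w) v s)
    (α : Vp → Set D → ℕ → D → ℕ)
    (hα : ∀ (x : Vp) (P : Set D) (j : ℕ), P.Nonempty → (∀ e ∈ P, tl e = x) →
      Set.BijOn (α x P j) P (Set.Ico j (j + P.ncard)))
    (η : Vp → ℕ) (hs : StableD tl s η) (ha : AllowedD tl hd s η)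
    (t : {x : Vp // x ≠ s} → D)
    (ht : IsMDTree tl hd s α η t) :
    ∀ i : ℕ, 1 ≤ i → ∀ v : Vp,
      (v ∈ Bp tl hd s η i ↔
        ((folw hd s t)^[i] v = s ∧ ∀ j < i, (folw hd s t)^[j] v ≠ s)) := by
  intro i hi v
  constructor
  · exact fun hv => Bp_iter_eq ht hi hv
  · rintro ⟨h1, h2⟩
    have hvs : v ≠ s := by
      have := h2 0 (by omega)
      simpa using this
    obtain ⟨k, hk1, hk2⟩ := burn_complete ha v hvs
    obtain ⟨g1, g2⟩ := Bp_iter_eq ht hk1 hk2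
    rcases lt_trichotomy k i with h | h | h
    · exact absurd g1 (h2 k h)
    · exact h ▸ hk2
    · exact absurd h1 (g2 i h)
end
end
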